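/- Lipschitz property of the Skorohod-map velocity: fix T > 0, n ≥ 1, v ∈ ℝ, K ≥ 0, and let f = (f₁,…,f_n) and g = (g₁,…,g_n) be continuous functions on [0,T]. Let (I_f, V_f) and (I_g, V_g) be the solutions of the Skorohod system for (f, v, K) and (g, v, K) respectively. If ‖f − g‖_{[0,T]} < η, then ‖V_f − V_g‖_{[0,T]} ≤ (K η / n) exp(K T). -/

import Mathlib

open Set MeasureTheory

/-- The Skorohod reflection term: `m_f(t) = sup_{0 ≤ s ≤ t} max(-f(s), 0)`. -/
noncomputable def mf (f : ℝ → ℝ) (t : ℝ) : ℝ :=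
  sSup ((fun s => max (-f s) 0) '' Set.Icc 0 t)

/-- The supremum norm of `h` over `[a,b]`: `‖h‖_{[a,b]} = sup_{t ∈ [a,b]} |h(t)|`. -/
noncomputable def supNorm (h : ℝ → ℝ) (a b : ℝ) : ℝ :=
  sSup ((fun t => |h t|) '' Set.Icc a b)

/-- `(I, V)` is a solution of the multiparticle Skorohod system for data `(f, v, K)`:
with `m_i(t) = sup_{0 ≤ s ≤ t} max(-(f_i(s) + I(s)), 0)`, one has
`V(t) = -v + (K/n) ∑ᵢ m_i(t)` and `I(t) = ∫₀ᵗ V(s) ds` on `[0,T]`. -/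
def IsSkorohodSystemSol (T : ℝ) (n : ℕ) (f : Fin n → ℝ → ℝ) (v K : ℝ)
    (I V : ℝ → ℝ) : Prop :=
  ContinuousOn I (Set.Icc 0 T) ∧ ContinuousOn V (Set.Icc 0 T) ∧
  (∀ t ∈ Set.Icc 0 T,
    V t = -v + (K / (n : ℝ)) * ∑ i, mf (fun s => f i s + I s) t) ∧
  (∀ t ∈ Set.Icc 0 T, I t = ∫ s in (0:ℝ)..t, V s)

lemma mf_diff_le {a b : ℝ → ℝ} {t C : ℝ} (ht : 0 ≤ t)
    (hb : BddAbove ((fun s => max (-b s) 0) '' Set.Icc 0 t))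
    (hC : ∀ s ∈ Set.Icc 0 t, |a s - b s| ≤ C) :
    mf a t ≤ mf b t + C := by
  have h0 : (0:ℝ) ∈ Set.Icc 0 t := ⟨le_refl _, ht⟩
  have hC0 : 0 ≤ C := le_trans (abs_nonneg _) (hC 0 h0)
  have hmb0 : 0 ≤ mf b t :=
    le_trans (le_max_right (-b 0) 0) (le_csSup hb ⟨0, h0, rfl⟩)
  apply Real.sSup_le
  · rintro x ⟨s, hs, rfl⟩
    have h1 : max (-a s) 0 - max (-b s) 0 ≤ |a s - b s| := by
      have h2 : |(-a s) - (-b s)| = |a s - b s| := by rw [abs_sub_comm]; ring_nf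
      calc max (-a s) 0 - max (-b s) 0 ≤ |max (-a s) 0 - max (-b s) 0| := le_abs_self _
        _ ≤ |(-a s) - (-b s)| := abs_max_sub_max_le_abs (-a s) (-b s) 0
        _ = |a s - b s| := h2
    have h3 : max (-b s) 0 ≤ mf b t := le_csSup hb ⟨s, hs, rfl⟩
    have := hC s hs
    simp only
    linarith
  · linarith

/-- Lipschitz property of the Skorohod-map velocity: if `‖f - g‖_{[0,T]} < η`, then
`‖V_f - V_g‖_{[0,T]} ≤ (Kη/n) exp(KT)`. -/
theorem stmt_8 (T : ℝ) (hT : 0 < T) (n : ℕ) (hn : 1 ≤ n)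
    (v K : ℝ) (hK : 0 ≤ K)
    (f g : Fin n → ℝ → ℝ)
    (hf : ∀ i, ContinuousOn (f i) (Set.Icc 0 T))
    (hg : ∀ i, ContinuousOn (g i) (Set.Icc 0 T))
    (If Vf Ig Vg : ℝ → ℝ)
    (hsolf : IsSkorohodSystemSol T n f v K If Vf)
    (hsolg : IsSkorohodSystemSol T n g v K Ig Vg)
    (η : ℝ)
    (hη : (∑ i, supNorm (fun t => f i t - g i t) 0 T) < η) :
    supNorm (fun t => Vf t - Vg t) 0 T ≤ (K * η / (n : ℝ)) * Real.exp (K * T) := by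
  obtain ⟨hIf, hVf, hVfeq, hIfeq⟩ := hsolf
  obtain ⟨hIg, hVg, hVgeq, hIgeq⟩ := hsolg
  have hn0 : (n:ℝ) ≠ 0 := Nat.cast_ne_zero.2 (by omega)
  have hnpos : (0:ℝ) < n := Nat.cast_pos.2 (by omega)
  set S : ℝ := ∑ i, supNorm (fun t => f i t - g i t) 0 T with hS
  set ε : ℝ := K * S / n with hε
  -- D i bounds
  have hDnn : ∀ i, 0 ≤ supNorm (fun t => f i t - g i t) 0 T := by
    intro i
    have hbdd : BddAbove ((fun t => |f i t - g i t|) '' Set.Icc 0 T) :=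
      (isCompact_Icc.image_of_continuousOn (((hf i).sub (hg i)).abs)).bddAbove
    exact le_trans (abs_nonneg _) (le_csSup hbdd ⟨0, ⟨le_refl _, hT.le⟩, rfl⟩)
  have hSnn : 0 ≤ S := Finset.sum_nonneg fun i _ => hDnn i
  have hDle : ∀ i, ∀ s ∈ Set.Icc (0:ℝ) T,
      |f i s - g i s| ≤ supNorm (fun t => f i t - g i t) 0 T := by
    intro i s hs
    have hbdd : BddAbove ((fun t => |f i t - g i t|) '' Set.Icc 0 T) :=
      (isCompact_Icc.image_of_continuousOn (((hf i).sub (hg i)).abs)).bddAbove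
    exact le_csSup hbdd ⟨s, hs, rfl⟩
  -- ΔV and ψ
  have hVd : ContinuousOn (fun s => |Vf s - Vg s|) (Set.Icc 0 T) := (hVf.sub hVg).abs
  set ψ : ℝ → ℝ := fun t => ∫ s in (0:ℝ)..t, |Vf s - Vg s| with hψ
  have hsub : ∀ t ∈ Set.Icc (0:ℝ) T, Set.uIcc (0:ℝ) t ⊆ Set.Icc 0 T := by
    intro t ht
    rw [Set.uIcc_of_le ht.1]
    exact Set.Icc_subset_Icc le_rfl ht.2
  have hint : ∀ t ∈ Set.Icc (0:ℝ) T,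
      IntervalIntegrable (fun s => |Vf s - Vg s|) volume 0 t := fun t ht =>
    (hVd.mono (hsub t ht)).intervalIntegrable
  have hψcont : ContinuousOn ψ (Set.Icc 0 T) := by
    have := intervalIntegral.continuousOn_primitive_interval
      (f := fun s => |Vf s - Vg s|) (μ := volume) (a := (0:ℝ)) (b := T)
      (by
        rw [Set.uIcc_of_le hT.le]
        exact hVd.integrableOn_compact isCompact_Icc)
    rwa [Set.uIcc_of_le hT.le] at this
  have hψnn : ∀ t ∈ Set.Icc (0:ℝ) T, 0 ≤ ψ t := fun t ht =>
    intervalIntegral.integral_nonneg ht.1 fun s _ => abs_nonneg _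
  have hψmono : ∀ s t, s ∈ Set.Icc (0:ℝ) T → t ∈ Set.Icc (0:ℝ) T → s ≤ t → ψ s ≤ ψ t := by
    intro s t hs' ht' hst
    have h1 : IntervalIntegrable (fun u => |Vf u - Vg u|) volume 0 s := hint s hs'
    have h2 : IntervalIntegrable (fun u => |Vf u - Vg u|) volume s t := by
      apply (hVd.mono _).intervalIntegrable
      rw [Set.uIcc_of_le hst]
      exact Set.Icc_subset_Icc hs'.1 ht'.2
    have := intervalIntegral.integral_add_adjacent_intervals h1 h2
    have hnn : 0 ≤ ∫ u in s..t, |Vf u - Vg u| :=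
      intervalIntegral.integral_nonneg hst fun u _ => abs_nonneg _
    simp only [hψ]
    linarith [this]
  -- |ΔI s| ≤ ψ t for s ≤ t
  have hIbound : ∀ t ∈ Set.Icc (0:ℝ) T, ∀ s ∈ Set.Icc (0:ℝ) t, |If s - Ig s| ≤ ψ t := by
    intro t ht s hs
    have hsT : s ∈ Set.Icc (0:ℝ) T := ⟨hs.1, hs.2.trans ht.2⟩
    have hVfint : IntervalIntegrable Vf volume 0 s := (hVf.mono (hsub s hsT)).intervalIntegrable
    have hVgint : IntervalIntegrable Vg volume 0 s := (hVg.mono (hsub s hsT)).intervalIntegrable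
    have hIdiff : If s - Ig s = ∫ u in (0:ℝ)..s, (Vf u - Vg u) := by
      rw [hIfeq s hsT, hIgeq s hsT, intervalIntegral.integral_sub hVfint hVgint]
    rw [hIdiff]
    calc |∫ u in (0:ℝ)..s, (Vf u - Vg u)| ≤ ∫ u in (0:ℝ)..s, |Vf u - Vg u| :=
          intervalIntegral.abs_integral_le_integral_abs hs.1
      _ = ψ s := rfl
      _ ≤ ψ t := hψmono s t hsT ht hs.2
  -- key pointwise bound
  have hbound : ∀ t ∈ Set.Icc (0:ℝ) T, |Vf t - Vg t| ≤ ε + K * ψ t := by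
    intro t ht
    have hsum : |(∑ i, mf (fun s => f i s + If s) t) - ∑ i, mf (fun s => g i s + Ig s) t|
        ≤ S + n * ψ t := by
      have key : ∀ (a b : Fin n → ℝ → ℝ) (Ia Ib : ℝ → ℝ),
          (∀ i, ContinuousOn (a i) (Set.Icc 0 T)) → (∀ i, ContinuousOn (b i) (Set.Icc 0 T)) →
          ContinuousOn Ib (Set.Icc 0 T) →
          (∀ i, ∀ s ∈ Set.Icc (0:ℝ) t, |(a i s + Ia s) - (b i s + Ib s)| ≤
            supNorm (fun u => f i u - g i u) 0 T + ψ t) →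
          (∑ i, mf (fun s => a i s + Ia s) t) ≤
            (∑ i, mf (fun s => b i s + Ib s) t) + (S + n * ψ t) := by
        intro a b Ia Ib ha hb hIb hab
        have h1 : ∀ i, mf (fun s => a i s + Ia s) t ≤ mf (fun s => b i s + Ib s) t +
            (supNorm (fun u => f i u - g i u) 0 T + ψ t) := by
          intro i
          apply mf_diff_le ht.1 _ (hab i)
          apply (isCompact_Icc.image_of_continuousOn _).bddAbove
          have hc : ContinuousOn (fun s => b i s + Ib s) (Set.Icc 0 t) :=
            ((hb i).add hIb).mono (Set.Icc_subset_Icc le_rfl ht.2)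
          exact (continuous_id.neg.max continuous_const).comp_continuousOn hc
        calc (∑ i, mf (fun s => a i s + Ia s) t)
            ≤ ∑ i, (mf (fun s => b i s + Ib s) t +
              (supNorm (fun u => f i u - g i u) 0 T + ψ t)) :=
              Finset.sum_le_sum fun i _ => h1 i
          _ = (∑ i, mf (fun s => b i s + Ib s) t) + (S + n * ψ t) := by
              rw [Finset.sum_add_distrib, Finset.sum_add_distrib]
              simp only [hS, Finset.sum_const, Finset.card_univ, Fintype.card_fin,
                nsmul_eq_mul]
      have hptfg : ∀ i, ∀ s ∈ Set.Icc (0:ℝ) t, |(f i s + If s) - (g i s + Ig s)| ≤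
          supNorm (fun u => f i u - g i u) 0 T + ψ t := by
        intro i s hs
        have hsT : s ∈ Set.Icc (0:ℝ) T := ⟨hs.1, hs.2.trans ht.2⟩
        calc |(f i s + If s) - (g i s + Ig s)| = |(f i s - g i s) + (If s - Ig s)| := by ring_nf
          _ ≤ |f i s - g i s| + |If s - Ig s| := abs_add_le _ _
          _ ≤ supNorm (fun u => f i u - g i u) 0 T + ψ t :=
              add_le_add (hDle i s hsT) (hIbound t ht s hs)
      have hptgf : ∀ i, ∀ s ∈ Set.Icc (0:ℝ) t, |(g i s + Ig s) - (f i s + If s)| ≤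
          supNorm (fun u => f i u - g i u) 0 T + ψ t := by
        intro i s hs
        rw [abs_sub_comm]; exact hptfg i s hs
      have h1 := key f g If Ig hf hg hIg hptfg
      have h2 := key g f Ig If hg hf hIf hptgf
      rw [abs_sub_le_iff]
      constructor <;> linarith
    have hVfg : Vf t - Vg t = (K / n) * ((∑ i, mf (fun s => f i s + If s) t) -
        ∑ i, mf (fun s => g i s + Ig s) t) := by
      rw [hVfeq t ht, hVgeq t ht]; ring
    rw [hVfg, abs_mul, abs_of_nonneg (by positivity : (0:ℝ) ≤ K / n)]
    calc K / n * |(∑ i, mf (fun s => f i s + If s) t) - ∑ i, mf (fun s => g i s + Ig s) t|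
        ≤ K / n * (S + n * ψ t) := by
          apply mul_le_mul_of_nonneg_left hsum (by positivity)
      _ = ε + K * ψ t := by field_simp [hε]; rw [hε]; field_simp
  -- conclude
  rcases eq_or_lt_of_le hK with hK0 | hKpos
  · -- K = 0
    have : supNorm (fun t => Vf t - Vg t) 0 T ≤ 0 := by
      apply Real.sSup_le _ le_rfl
      rintro x ⟨t, ht, rfl⟩
      have := hbound t ht
      simp only [hε, ← hK0] at this
      simpa using this
    have h0 : K * η / n * Real.exp (K * T) = 0 := by rw [← hK0]; ring
    linarith [h0 ▸ this]
  · -- K > 0 : Grönwall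
    have hεnn : 0 ≤ ε := by positivity
    have hgron : ∀ t ∈ Set.Icc (0:ℝ) T, ψ t ≤ gronwallBound 0 K ε (t - 0) := by
      have hderiv : ∀ t ∈ Set.Ico (0:ℝ) T,
          HasDerivWithinAt ψ (|Vf t - Vg t|) (Set.Ici t) t := by
        intro t ht
        have htT : t ∈ Set.Icc (0:ℝ) T := ⟨ht.1, ht.2.le⟩
        have hmem : Set.Icc (0:ℝ) T ∈ nhdsWithin t (Set.Ioi t) := by
          apply mem_nhdsWithin.2
          exact ⟨Set.Iio T, isOpen_Iio, ht.2, fun s hs =>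
            ⟨le_of_lt (lt_of_le_of_lt ht.1 hs.2), hs.1.le⟩⟩
        have hmeas : StronglyMeasurableAtFilter (fun s => |Vf s - Vg s|)
            (nhdsWithin t (Set.Ioi t)) volume :=
          ⟨Set.Icc 0 T, hmem, (hVd.aestronglyMeasurable measurableSet_Icc)⟩
        have hcw : ContinuousWithinAt (fun s => |Vf s - Vg s|) (Set.Ioi t) t := by
          apply (hVd t htT).mono_of_mem_nhdsWithin hmem
        exact intervalIntegral.integral_hasDerivWithinAt_right (hint t htT) hmeas hcw
      have := norm_le_gronwallBound_of_norm_deriv_right_le (f := ψ)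
        (f' := fun t => |Vf t - Vg t|) (δ := 0) (K := K) (ε := ε) (a := 0) (b := T)
        hψcont hderiv (by simp [hψ]) ?_
      · intro t ht
        have h := this t ht
        rwa [Real.norm_eq_abs, abs_of_nonneg (hψnn t ht)] at h
      · intro t ht
        have htT : t ∈ Set.Icc (0:ℝ) T := ⟨ht.1, ht.2.le⟩
        rw [Real.norm_eq_abs, Real.norm_eq_abs, abs_abs, abs_of_nonneg (hψnn t htT)]
        linarith [hbound t htT]
    have hfinal : ∀ t ∈ Set.Icc (0:ℝ) T, |Vf t - Vg t| ≤ ε * Real.exp (K * T) := by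
      intro t ht
      have h1 := hbound t ht
      have h2 := hgron t ht
      rw [gronwallBound_of_K_ne_0 (ne_of_gt hKpos)] at h2
      simp only [sub_zero, zero_mul, zero_add] at h2
      have hKψ : K * ψ t ≤ ε * (Real.exp (K * t) - 1) := by
        have := mul_le_mul_of_nonneg_left h2 hKpos.le
        calc K * ψ t ≤ K * (ε / K * (Real.exp (K * t) - 1)) := this
          _ = ε * (Real.exp (K * t) - 1) := by field_simp
      have hexp : Real.exp (K * t) ≤ Real.exp (K * T) :=
        Real.exp_le_exp.2 (mul_le_mul_of_nonneg_left ht.2 hKpos.le)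
      nlinarith [Real.exp_pos (K * t)]
    apply Real.sSup_le
    · rintro x ⟨t, ht, rfl⟩
      calc |Vf t - Vg t| ≤ ε * Real.exp (K * T) := hfinal t ht
        _ ≤ K * η / n * Real.exp (K * T) := by
            apply mul_le_mul_of_nonneg_right _ (Real.exp_pos _).le
            rw [hε]
            gcongr
    · have hηnn : 0 ≤ η := hSnn.trans hη.le
      positivity
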